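/- arXiv:2102.13244 — 2 statements merged into one kernel-verified Lean document; each statement's English description precedes it below -/
import Mathlib

section
/- Consider the CODER iteration as in the context with F satisfying the blockwise Lipschitz assumption with matrices Qⁱ and L² = ‖∑_{i=1}^m Q̂ⁱ‖. Then (one-step lower bound) for every u ∈ ℝ^d and every k ≥ 1: ψ_k(x_k; u) ≥ ψ_{k−1}(x_{k−1}; u) + ((1+γA_{k−1})/4)‖x_k − x_{k−1}‖² − (a_{k−1}²/(1+γA_{k−1}))‖F(x_{k−1}) − p_{k−1}‖² + a_k⟨p_k − F(x_k), x_k − u⟩ − a_{k−1}⟨p_{k−1} − F(x_{k−1}), x_{k−1} − u⟩ + a_k(⟨F(x_k), x_k − u⟩ + g(x_k) − g(u)), where the term with coefficient a_{k−1}²/(1+γA_{k−1}) is interpreted as 0 when k = 1 (since a₀ = 0 and p₀ = F(x₀)). -/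
open scoped RealInnerProductSpace
set_option maxHeartbeats 1000000

private lemma normCombo {E : Type*} [NormedAddCommGroup E] [InnerProductSpace ℝ E]
    (x z : E) (t : ℝ) :
    ‖t•x + (1-t)•z‖^2 = t*‖x‖^2 + (1-t)*‖z‖^2 - t*(1-t)*‖x-z‖^2 := by
  simp only [← real_inner_self_eq_norm_sq]
  simp only [inner_add_left, inner_add_right, inner_sub_left, inner_sub_right,
    real_inner_smul_left, real_inner_smul_right, real_inner_comm z x]
  ring

private lemma young {E : Type*} [NormedAddCommGroup E] [InnerProductSpace ℝ E]
    (v w : E) (c μ : ℝ) (hμ : 0 < μ) :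
    - (c^2/μ) * ‖v‖^2 - μ/4 * ‖w‖^2 ≤ c * ⟪v, w⟫ := by
  have h := abs_real_inner_le_norm v w
  have h2 : -(|c| * (‖v‖*‖w‖)) ≤ c*⟪v,w⟫ := by
    have habs : |c*⟪v,w⟫| ≤ |c| *(‖v‖*‖w‖) := by
      rw [abs_mul]; exact mul_le_mul_of_nonneg_left h (abs_nonneg c)
    linarith [neg_abs_le (c*⟪v,w⟫)]
  have hD : μ * (c^2/μ) = c^2 := by field_simp
  nlinarith [sq_nonneg (2*|c| *‖v‖ - μ*‖w‖), sq_abs c, norm_nonneg v, norm_nonneg w,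
    abs_nonneg c, mul_le_mul_of_nonneg_left h2 hμ.le]

private lemma keyGrowth {E : Type*} [NormedAddCommGroup E] [InnerProductSpace ℝ E]
    (f : E → ℝ) (xs z : E) (μ : ℝ)
    (hcomb : ∀ t : ℝ, t ∈ Set.Ioo (0:ℝ) 1 →
      f (t•xs + (1-t)•z) ≤ t * f xs + (1-t) * f z - μ/2 * (t*(1-t)) * ‖xs - z‖^2)
    (hmin : ∀ w, f xs ≤ f w) :
    f xs + μ/2 * ‖z - xs‖^2 ≤ f z := by
  have hev : ∀ᶠ t in nhdsWithin (1:ℝ) (Set.Iio 1),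
      f xs + μ/2 * t * ‖z - xs‖^2 ≤ f z := by
    filter_upwards [Ioo_mem_nhdsLT_of_mem (show (1:ℝ) ∈ Set.Ioc 0 1 by norm_num)] with t ht
    have h1 := hcomb t ht
    have h2 := hmin (t•xs + (1-t)•z)
    have h3 : 0 < 1 - t := by linarith [ht.2]
    rw [norm_sub_rev xs z] at h1
    nlinarith [h1, h2]
  have htend : Filter.Tendsto (fun t : ℝ => f xs + μ/2 * t * ‖z - xs‖^2)
      (nhdsWithin (1:ℝ) (Set.Iio 1)) (nhds (f xs + μ/2 * 1 * ‖z - xs‖^2)) := by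
    apply Filter.Tendsto.mono_left _ nhdsWithin_le_nhds
    exact (Continuous.tendsto (by continuity) 1)
  have := le_of_tendsto htend hev
  simpa using this

private lemma normsq_eq {d : ℕ} (v : EuclideanSpace ℝ (Fin d)) : ‖v‖^2 = ∑ j, (v j)^2 := by
  rw [EuclideanSpace.norm_eq, Real.sq_sqrt (by positivity)]; simp [sq_abs]
open scoped RealInnerProductSpace

/-- Operator norm of a square real matrix, viewed as a linear map on Euclidean space. -/
noncomputable def matOpNorm {d : ℕ} (Q : Matrix (Fin d) (Fin d) ℝ) : ℝ :=
  ‖Matrix.toEuclideanCLM (𝕜 := ℝ) Q‖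

/-- The quadratic form `vᵀ Q v` on Euclidean space. -/
noncomputable def quadForm {d : ℕ} (Q : Matrix (Fin d) (Fin d) ℝ)
    (v : EuclideanSpace ℝ (Fin d)) : ℝ :=
  ⟪v, Matrix.toEuclideanCLM (𝕜 := ℝ) Q v⟫

/-- one-step lower bound for the CODER estimation sequence.
Under the CODER iteration, with `F` satisfying the blockwise Lipschitz assumption
with PSD matrices `Qⁱ` and `L² = ‖∑ᵢ Q̂ⁱ‖`, for every `u` and every `k ≥ 1`
(stated below with `k ≥ 1` replaced by the index shift `k ↦ k+1`):
`ψ_k(x_k; u) ≥ ψ_{k−1}(x_{k−1}; u) + ((1+γA_{k−1})/4)‖x_k − x_{k−1}‖²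
  − (a_{k−1}²/(1+γA_{k−1}))‖F(x_{k−1}) − p_{k−1}‖²
  + a_k⟨p_k − F(x_k), x_k − u⟩ − a_{k−1}⟨p_{k−1} − F(x_{k−1}), x_{k−1} − u⟩
  + a_k(⟨F(x_k), x_k − u⟩ + g(x_k) − g(u))`
(the term with coefficient `a_{k−1}²/(1+γA_{k−1})` vanishes for `k = 1` since
`a₀ = 0`). -/
theorem stmt10 {d m : ℕ} (blk : Fin d → Fin m) (hblk : Monotone blk)
    (F : EuclideanSpace ℝ (Fin d) → EuclideanSpace ℝ (Fin d))
    (γ L : ℝ) (hγ : 0 ≤ γ) (hL : 0 < L)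
    -- blockwise Lipschitz assumption
    (Q : Fin m → Matrix (Fin d) (Fin d) ℝ)
    (hpsd : ∀ i, (Q i).PosSemidef)
    (hlip : ∀ (i : Fin m) (z w : EuclideanSpace ℝ (Fin d)),
      ∑ j ∈ Finset.univ.filter (fun j => blk j = i), (F z j - F w j) ^ 2
        ≤ quadForm (Q i) (z - w))
    (Qhat : Fin m → Matrix (Fin d) (Fin d) ℝ)
    (hQhat : ∀ (i : Fin m) (j k : Fin d),
      Qhat i j k = if i ≤ blk j ∧ i ≤ blk k then Q i j k else 0)
    (hL2 : L ^ 2 = matOpNorm (∑ i, Qhat i))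
    -- the block components of the separable regularizer g
    (g : Fin m → EuclideanSpace ℝ (Fin d) → ℝ)
    (hgdep : ∀ (i : Fin m) (z w : EuclideanSpace ℝ (Fin d)),
      (∀ j, blk j = i → z j = w j) → g i z = g i w)
    (hgsc : ∀ i : Fin m, ConvexOn ℝ Set.univ (fun z : EuclideanSpace ℝ (Fin d) =>
      g i z - γ / 2 * ∑ j ∈ Finset.univ.filter (fun j => blk j = i), (z j) ^ 2))
    (G : EuclideanSpace ℝ (Fin d) → ℝ) (hG : ∀ z, G z = ∑ i, g i z)
    -- step sizes
    (a A : ℕ → ℝ) (ha0 : a 0 = 0) (hA0 : A 0 = 0)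
    (ha : ∀ k : ℕ, a (k + 1) = (1 + γ * A k) / (2 * L))
    (hA : ∀ k : ℕ, A (k + 1) = A k + a (k + 1))
    -- iterates, cyclic coordinate gradients, and extrapolated gradients
    (x p q : ℕ → EuclideanSpace ℝ (Fin d))
    (hp0 : p 0 = F (x 0))
    (hp : ∀ (k : ℕ) (j : Fin d),
      p (k + 1) j = F (WithLp.toLp 2 (fun j' => if blk j' < blk j then x (k + 1) j' else x k j')) j)
    (hq : ∀ (k : ℕ) (j : Fin d),
      q (k + 1) j = p (k + 1) j + a k / a (k + 1) * (F (x k) j - p k j))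
    -- estimation sequence and its minimization property
    (ψ : ℕ → EuclideanSpace ℝ (Fin d) → EuclideanSpace ℝ (Fin d) → ℝ)
    (hψ : ∀ (k : ℕ) (z u : EuclideanSpace ℝ (Fin d)),
      ψ k z u = ∑ j ∈ Finset.Icc 1 k, a j * (⟪q j, z - u⟫ + G z - G u)
        + 1 / 2 * ‖z - x 0‖ ^ 2)
    (hxmin : ∀ k : ℕ, 1 ≤ k → ∀ u z : EuclideanSpace ℝ (Fin d), ψ k (x k) u ≤ ψ k z u) :
    ∀ (u : EuclideanSpace ℝ (Fin d)) (k : ℕ),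
      ψ (k + 1) (x (k + 1)) u ≥
        ψ k (x k) u
        + (1 + γ * A k) / 4 * ‖x (k + 1) - x k‖ ^ 2
        - a k ^ 2 / (1 + γ * A k) * ‖F (x k) - p k‖ ^ 2
        + a (k + 1) * ⟪p (k + 1) - F (x (k + 1)), x (k + 1) - u⟫
        - a k * ⟪p k - F (x k), x k - u⟫
        + a (k + 1) * (⟪F (x (k + 1)), x (k + 1) - u⟫ + G (x (k + 1)) - G u) := by

  intro u k
  -- basic positivity facts
  have hApos : ∀ n, 0 ≤ A n := by
    intro n
    induction n with
    | zero => simp [hA0]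
    | succ n ih =>
      have h1 : 0 ≤ γ * A n := mul_nonneg hγ ih
      have h2 : 0 ≤ (1 + γ * A n) / (2 * L) := div_nonneg (by linarith) (by linarith)
      rw [hA n, ha n]; linarith
  have hann : ∀ n, 0 ≤ a n := by
    intro n
    cases n with
    | zero => simp [ha0]
    | succ n =>
      have h1 : 0 ≤ γ * A n := mul_nonneg hγ (hApos n)
      rw [ha n]; exact div_nonneg (by linarith) (by linarith)
  have hμpos : 0 < 1 + γ * A k := by
    have := mul_nonneg hγ (hApos k); linarith
  have hak1 : 0 < a (k + 1) := by
    rw [ha k]; exact div_pos hμpos (by linarith)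
  have hsumA : ∀ n, ∑ j ∈ Finset.Icc 1 n, a j = A n := by
    intro n
    induction n with
    | zero => rw [Finset.Icc_eq_empty (by omega)]; simp [hA0]
    | succ n ih => rw [Finset.sum_Icc_succ_top (by omega), ih, hA n]
  -- G is γ-strongly convex
  have hGm : ∀ w : EuclideanSpace ℝ (Fin d),
      ∑ i, (g i w - γ/2 * ∑ j ∈ Finset.univ.filter (fun j => blk j = i), (w j)^2)
        = G w - γ/2 * ‖w‖^2 := by
    intro w
    rw [Finset.sum_sub_distrib, ← Finset.mul_sum, Finset.sum_fiberwise, hG, normsq_eq]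
  have e2 : ∀ (y z : EuclideanSpace ℝ (Fin d)) (t : ℝ), 0 ≤ t → t ≤ 1 →
      G (t•y + (1-t)•z) ≤ t * G y + (1-t) * G z - γ/2 * (t*(1-t)) * ‖y - z‖^2 := by
    intro y z t ht0 ht1
    have hsum := Finset.sum_le_sum (f := fun i =>
        g i (t•y + (1-t)•z) - γ/2 * ∑ j ∈ Finset.univ.filter (fun j => blk j = i),
          ((t•y + (1-t)•z) j)^2)
      (g := fun i => t * (g i y - γ/2 * ∑ j ∈ Finset.univ.filter (fun j => blk j = i), (y j)^2)
        + (1-t) * (g i z - γ/2 * ∑ j ∈ Finset.univ.filter (fun j => blk j = i), (z j)^2))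
      (s := Finset.univ)
      (fun i _ => by
        have := (hgsc i).2 (Set.mem_univ y) (Set.mem_univ z) ht0 (by linarith)
          (by ring : t + (1-t) = 1)
        simpa using this)
    rw [hGm, Finset.sum_add_distrib, ← Finset.mul_sum, ← Finset.mul_sum, hGm, hGm] at hsum
    rw [normCombo y z t] at hsum
    nlinarith [hsum]
  -- rewriting ψ k
  have hψ' : ∀ w : EuclideanSpace ℝ (Fin d), ψ k w u =
      (∑ j ∈ Finset.Icc 1 k, a j * ⟪q j, w - u⟫) + A k * G w - A k * G u
        + 1/2 * ‖w - x 0‖^2 := by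
    intro w
    rw [hψ, ← hsumA k, Finset.sum_mul, Finset.sum_mul]
    have : ∀ j ∈ Finset.Icc 1 k, a j * (⟪q j, w - u⟫ + G w - G u)
        = a j * ⟪q j, w - u⟫ + a j * G w - a j * G u := fun j _ => by ring
    rw [Finset.sum_congr rfl this, Finset.sum_sub_distrib, Finset.sum_add_distrib]
  -- Step B: strong-convexity lower bound
  have stepB : ψ k (x k) u + (1 + γ * A k)/2 * ‖x (k+1) - x k‖^2 ≤ ψ k (x (k+1)) u := by
    cases k with
    | zero =>
      have h1 := hψ' (x 1)
      have h0 := hψ' (x 0)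
      have hIcc : Finset.Icc 1 0 = (∅ : Finset ℕ) := Finset.Icc_eq_empty (by omega)
      rw [hIcc] at h1 h0
      simp only [Finset.sum_empty, hA0] at h1 h0
      rw [h1, h0, hA0]
      simp only [sub_self, norm_zero, zero_mul, mul_zero, zero_add, zero_sub, sub_zero, neg_zero]
      ring_nf
      rfl
    | succ n =>
      apply keyGrowth (fun w => ψ (n+1) w u) (x (n+1)) (x (n+2)) (1 + γ * A (n+1))
        _ (fun w => hxmin (n+1) (by omega) u w)
      intro t ht
      have hw := hψ' (t • x (n+1) + (1-t) • x (n+2))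
      have hxk := hψ' (x (n+1))
      have hz := hψ' (x (n+2))
      -- linear part
      have elin : ∀ j : ℕ, ⟪q j, (t • x (n+1) + (1-t) • x (n+2)) - u⟫
          = t * ⟪q j, x (n+1) - u⟫ + (1-t) * ⟪q j, x (n+2) - u⟫ := by
        intro j
        have hv : (t • x (n+1) + (1-t) • x (n+2)) - u
            = t • (x (n+1) - u) + (1-t) • (x (n+2) - u) := by
          rw [smul_sub, smul_sub]; module
        rw [hv, inner_add_right, real_inner_smul_right, real_inner_smul_right]
      have esum : (∑ j ∈ Finset.Icc 1 (n+1), a j * ⟪q j, (t • x (n+1) + (1-t) • x (n+2)) - u⟫)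
          = t * (∑ j ∈ Finset.Icc 1 (n+1), a j * ⟪q j, x (n+1) - u⟫)
            + (1-t) * (∑ j ∈ Finset.Icc 1 (n+1), a j * ⟪q j, x (n+2) - u⟫) := by
        rw [Finset.mul_sum, Finset.mul_sum, ← Finset.sum_add_distrib]
        refine Finset.sum_congr rfl fun j _ => by rw [elin j]; ring
      -- G part
      have eG := e2 (x (n+1)) (x (n+2)) t ht.1.le ht.2.le
      have hAge : 0 ≤ A (n+1) := hApos (n+1)
      have eGA := mul_le_mul_of_nonneg_left eG hAge
      -- quadratic part
      have equad : ‖(t • x (n+1) + (1-t) • x (n+2)) - x 0‖^2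
          = t * ‖x (n+1) - x 0‖^2 + (1-t) * ‖x (n+2) - x 0‖^2
            - t*(1-t) * ‖x (n+1) - x (n+2)‖^2 := by
        have hv : (t • x (n+1) + (1-t) • x (n+2)) - x 0
            = t • (x (n+1) - x 0) + (1-t) • (x (n+2) - x 0) := by
          rw [smul_sub, smul_sub]; module
        rw [hv, normCombo]
        congr 3
        abel
      rw [hw, hxk, hz, esum, equad]
      nlinarith [eGA]
  -- Step A: recursion of ψ
  have stepA : ψ (k+1) (x (k+1)) u = ψ k (x (k+1)) u
      + a (k+1) * (⟪q (k+1), x (k+1) - u⟫ + G (x (k+1)) - G u) := by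
    rw [hψ, hψ, Finset.sum_Icc_succ_top (by omega)]
    ring
  -- Step C: decomposition of q
  have hqv : q (k+1) = p (k+1) + (a k / a (k+1)) • (F (x k) - p k) := by
    ext j
    simp only [PiLp.add_apply, PiLp.smul_apply, PiLp.sub_apply, smul_eq_mul]
    exact hq k j
  have hinner : ⟪q (k+1), x (k+1) - u⟫ = ⟪p (k+1), x (k+1) - u⟫
      + (a k / a (k+1)) * ⟪F (x k) - p k, x (k+1) - u⟫ := by
    rw [hqv, inner_add_left, real_inner_smul_left]
  have hc : a (k+1) * (a k / a (k+1)) = a k := by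
    field_simp
  have i1 : ⟪p (k+1), x (k+1) - u⟫ = ⟪p (k+1) - F (x (k+1)), x (k+1) - u⟫
      + ⟪F (x (k+1)), x (k+1) - u⟫ := by
    rw [inner_sub_left]; ring
  have i2 : ⟪F (x k) - p k, x (k+1) - u⟫ = - ⟪p k - F (x k), x k - u⟫
      + ⟪F (x k) - p k, x (k+1) - x k⟫ := by
    have hv : x (k+1) - u = (x k - u) + (x (k+1) - x k) := by abel
    rw [hv, inner_add_right]
    have : (⟪F (x k) - p k, x k - u⟫ : ℝ) = - ⟪p k - F (x k), x k - u⟫ := by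
      rw [show F (x k) - p k = -(p k - F (x k)) by abel, inner_neg_left]
    rw [this]
  -- Step E: Young's inequality
  have stepE : - (a k ^ 2 / (1 + γ * A k)) * ‖F (x k) - p k‖^2
      - (1 + γ * A k)/4 * ‖x (k+1) - x k‖^2 ≤ a k * ⟪F (x k) - p k, x (k+1) - x k⟫ :=
    young _ _ _ _ hμpos
  -- combine
  have hq2 : a (k+1) * (⟪q (k+1), x (k+1) - u⟫ + G (x (k+1)) - G u)
      = a (k+1) * ⟪p (k+1) - F (x (k+1)), x (k+1) - u⟫
        + a (k+1) * (⟪F (x (k+1)), x (k +1) - u⟫ + G (x (k+1)) - G u)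
        + a k * (- ⟪p k - F (x k), x k - u⟫ + ⟪F (x k) - p k, x (k+1) - x k⟫) := by
    rw [hinner, i1, i2]
    linear_combination (- ⟪p k - F (x k), x k - u⟫ + ⟪F (x k) - p k, x (k+1) - x k⟫) * hc
  rw [ge_iff_le, stepA, hq2]
  nlinarith [stepB, stepE]
end

section
/- Theorem 1, main inequality: under the CODER iteration with F monotone and satisfying the blockwise Lipschitz assumption, and with L² = ‖∑_{i=1}^m Q̂ⁱ‖ used in the step sizes a_k = (1+γA_{k−1})/(2L), for every u ∈ ℝ^d and every k ≥ 1: ∑_{j=1}^k a_j(⟨F(x_j), x_j − u⟩ + g(x_j) − g(u)) + ((1+γA_k)/4)‖u − x_k‖² ≤ ½‖u − x₀‖². -/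
open scoped RealInnerProductSpace

lemma convexOn_inner_affine {E : Type*} [NormedAddCommGroup E] [InnerProductSpace ℝ E]
    (w : E) (c : ℝ) : ConvexOn ℝ Set.univ (fun z : E => ⟪w, z⟫ + c) := by
  refine ⟨convex_univ, fun z _ y _ s t hs ht hst => ?_⟩
  simp only [inner_add_right, real_inner_smul_right, smul_eq_mul]
  have : t = 1 - s := by linarith
  subst this; ring_nf; rfl

lemma strongMin {E : Type*} [NormedAddCommGroup E] [InnerProductSpace ℝ E]
    (φ : E → ℝ) (μ : ℝ) (hμ : 0 ≤ μ)
    (hconv : ConvexOn ℝ Set.univ (fun z => φ z - μ / 2 * ‖z‖ ^ 2))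
    (xs : E) (hmin : ∀ z, φ xs ≤ φ z) (u : E) :
    φ xs + μ / 2 * ‖u - xs‖ ^ 2 ≤ φ u := by
  have hconv2 : ConvexOn ℝ Set.univ (fun z => φ z - μ / 2 * ‖z - xs‖ ^ 2) := by
    have heq : (fun z : E => φ z - μ / 2 * ‖z - xs‖ ^ 2)
        = fun z => (φ z - μ / 2 * ‖z‖ ^ 2) + (⟪μ • xs, z⟫ + (- (μ / 2 * ‖xs‖ ^ 2))) := by
      funext z
      have h1 : ‖z - xs‖ ^ 2 = ‖z‖ ^ 2 - 2 * ⟪z, xs⟫ + ‖xs‖ ^ 2 := norm_sub_sq_real z xs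
      rw [h1, real_inner_smul_left, real_inner_comm]; ring
    rw [heq]
    exact hconv.add (convexOn_inner_affine _ _)
  set c := ‖u - xs‖ ^ 2 with hc
  have hc0 : 0 ≤ c := sq_nonneg _
  have key : ∀ t : ℝ, 0 < t → t ≤ 1 → φ xs ≤ φ u - μ / 2 * c + μ * c / 2 * t := by
    intro t ht0 ht1
    have hz : (1 - t) • xs + t • u = xs + t • (u - xs) := by
      rw [smul_sub, sub_smul, one_smul]; abel
    have hcv := hconv2.2 (Set.mem_univ xs) (Set.mem_univ u)
      (by linarith : (0:ℝ) ≤ 1 - t) (le_of_lt ht0) (by ring)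
    rw [hz] at hcv
    simp only [smul_eq_mul] at hcv
    have hnorm : ‖xs + t • (u - xs) - xs‖ ^ 2 = t ^ 2 * c := by
      rw [add_sub_cancel_left, norm_smul]
      simp [hc, abs_of_pos ht0]; ring
    rw [hnorm] at hcv
    simp only [sub_self, norm_zero] at hcv
    have h1 : φ xs - μ / 2 * (t ^ 2 * c)
        ≤ (1 - t) * (φ xs - μ / 2 * 0 ^ 2) + t * (φ u - μ / 2 * c) := by
      calc φ xs - μ / 2 * (t ^ 2 * c) ≤ φ (xs + t • (u - xs)) - μ / 2 * (t ^ 2 * c) := by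
            linarith [hmin (xs + t • (u - xs))]
        _ ≤ _ := hcv
    have h2 : t * φ xs ≤ t * (φ u - μ / 2 * c + μ * c / 2 * t) := by nlinarith
    exact (mul_le_mul_iff_right₀ ht0).mp h2
  have final : φ xs ≤ φ u - μ / 2 * c := by
    refine le_of_forall_pos_le_add fun ε hε => ?_
    have hden : (0:ℝ) < μ * c / 2 + 1 := by positivity
    set t : ℝ := min 1 (ε / (μ * c / 2 + 1)) with htdef
    have ht0 : 0 < t := lt_min one_pos (by positivity)
    have ht1 : t ≤ 1 := min_le_left _ _
    have hkey := key t ht0 ht1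
    have hbound : μ * c / 2 * t ≤ ε := by
      calc μ * c / 2 * t ≤ μ * c / 2 * (ε / (μ * c / 2 + 1)) := by
            apply mul_le_mul_of_nonneg_left (min_le_right _ _) (by positivity)
        _ ≤ ε := by
            rw [mul_div_assoc', div_le_iff₀ hden]; nlinarith
    linarith
  linarith

lemma quadForm_eq {d : ℕ} (Q : Matrix (Fin d) (Fin d) ℝ) (v : EuclideanSpace ℝ (Fin d)) :
    quadForm Q v = ∑ j, ∑ k, v j * (Q j k * v k) := by
  rw [quadForm, PiLp.inner_apply]
  refine Finset.sum_congr rfl fun j _ => ?_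
  have : (Matrix.toEuclideanCLM (𝕜 := ℝ) Q v) j = ∑ k, Q j k * v k := rfl
  simp [RCLike.inner_apply, this, Finset.mul_sum]
  rw [Finset.sum_mul]; exact Finset.sum_congr rfl fun _ _ => by ring

lemma norm_sq_eq_sum {d : ℕ} (v : EuclideanSpace ℝ (Fin d)) : ‖v‖ ^ 2 = ∑ j, (v j) ^ 2 := by
  rw [← real_inner_self_eq_norm_sq, PiLp.inner_apply]
  simp [RCLike.inner_apply]

lemma errBound {d m : ℕ} (blk : Fin d → Fin m)
    (F : EuclideanSpace ℝ (Fin d) → EuclideanSpace ℝ (Fin d)) (L : ℝ) (hL : 0 < L)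
    (Q : Fin m → Matrix (Fin d) (Fin d) ℝ)
    (hlip : ∀ (i : Fin m) (z w : EuclideanSpace ℝ (Fin d)),
      ∑ j ∈ Finset.univ.filter (fun j => blk j = i), (F z j - F w j) ^ 2
        ≤ quadForm (Q i) (z - w))
    (Qhat : Fin m → Matrix (Fin d) (Fin d) ℝ)
    (hQhat : ∀ (i : Fin m) (j k : Fin d),
      Qhat i j k = if i ≤ blk j ∧ i ≤ blk k then Q i j k else 0)
    (hL2 : L ^ 2 = matOpNorm (∑ i, Qhat i))
    (znew zold pvec : EuclideanSpace ℝ (Fin d))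
    (hpvec : ∀ j : Fin d,
      pvec j = F (WithLp.toLp 2 (fun j' => if blk j' < blk j then znew j' else zold j')) j) :
    ‖F znew - pvec‖ ≤ L * ‖znew - zold‖ := by
  set δ : EuclideanSpace ℝ (Fin d) := znew - zold with hδ
  have hsq : ‖F znew - pvec‖ ^ 2 ≤ L ^ 2 * ‖δ‖ ^ 2 := by
    have h1 : ‖F znew - pvec‖ ^ 2 = ∑ j, (F znew j - pvec j) ^ 2 := by
      rw [norm_sq_eq_sum]; rfl
    have h2 : ∑ j, (F znew j - pvec j) ^ 2
        = ∑ i, ∑ j ∈ Finset.univ.filter (fun j => blk j = i), (F znew j - pvec j) ^ 2 :=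
      (Finset.sum_fiberwise Finset.univ blk _).symm
    rw [h1, h2]
    have h3 : ∀ i : Fin m, ∑ j ∈ Finset.univ.filter (fun j => blk j = i),
        (F znew j - pvec j) ^ 2 ≤ quadForm (Qhat i) δ := by
      intro i
      set w : EuclideanSpace ℝ (Fin d) := WithLp.toLp 2 (fun j' => if blk j' < i then znew j' else zold j')
        with hw
      have step1 : ∑ j ∈ Finset.univ.filter (fun j => blk j = i), (F znew j - pvec j) ^ 2
          = ∑ j ∈ Finset.univ.filter (fun j => blk j = i), (F znew j - F w j) ^ 2 := by
        refine Finset.sum_congr rfl fun j hj => ?_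
        have hbj : blk j = i := (Finset.mem_filter.mp hj).2
        rw [hpvec j, hbj]
      have step2 : quadForm (Q i) (znew - w) = quadForm (Qhat i) δ := by
        rw [quadForm_eq, quadForm_eq]
        refine Finset.sum_congr rfl fun j _ => Finset.sum_congr rfl fun k _ => ?_
        have hvj : ∀ j' : Fin d, (znew - w) j' = if i ≤ blk j' then δ j' else 0 := by
          intro j'
          by_cases h : blk j' < i
          · simp only [hδ, PiLp.sub_apply, hw]
            simp [h, not_le.mpr h]
          · simp only [hδ, PiLp.sub_apply, hw]
            simp [h, not_lt.mp h]
        rw [hvj j, hvj k, hQhat]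
        by_cases h1 : i ≤ blk j <;> by_cases h2 : i ≤ blk k <;> simp [h1, h2]
      rw [step1, ← step2]
      exact hlip i znew w
    calc ∑ i, ∑ j ∈ Finset.univ.filter (fun j => blk j = i), (F znew j - pvec j) ^ 2
        ≤ ∑ i, quadForm (Qhat i) δ := Finset.sum_le_sum fun i _ => h3 i
      _ = quadForm (∑ i, Qhat i) δ := by
          rw [quadForm, map_sum]
          simp [inner_sum, quadForm]
      _ ≤ matOpNorm (∑ i, Qhat i) * ‖δ‖ ^ 2 := by
          rw [quadForm, matOpNorm]
          calc ⟪δ, Matrix.toEuclideanCLM (𝕜 := ℝ) (∑ i, Qhat i) δ⟫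
              ≤ ‖δ‖ * ‖Matrix.toEuclideanCLM (𝕜 := ℝ) (∑ i, Qhat i) δ‖ := real_inner_le_norm _ _
            _ ≤ ‖δ‖ * (‖Matrix.toEuclideanCLM (𝕜 := ℝ) (∑ i, Qhat i)‖ * ‖δ‖) := by
                gcongr; exact ContinuousLinearMap.le_opNorm _ _
            _ = _ := by ring
      _ = L ^ 2 * ‖δ‖ ^ 2 := by rw [hL2]
  nlinarith [norm_nonneg (F znew - pvec), norm_nonneg δ, mul_nonneg hL.le (norm_nonneg δ)]

lemma convexOn_finset_sum {E : Type*} [NormedAddCommGroup E] [InnerProductSpace ℝ E]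
    {ι : Type*} (t : Finset ι) (f : ι → E → ℝ)
    (h : ∀ i ∈ t, ConvexOn ℝ Set.univ (f i)) :
    ConvexOn ℝ Set.univ (fun z => ∑ i ∈ t, f i z) := by
  induction t using Finset.cons_induction with
  | empty => simpa using convexOn_const (0:ℝ) convex_univ
  | cons i t hi ih =>
      simp only [Finset.sum_cons]
      exact (h i (Finset.mem_cons_self _ _)).add (ih fun j hj => h j (Finset.mem_cons.mpr (Or.inr hj)))

lemma youngIneq {mu1 mu2 b c I : ℝ} (h1 : 0 < mu1) (h2 : mu1 ≤ mu2)
    (hI : I ≤ mu1 / 2 * b * c) :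
    -(mu1 / 4 * b ^ 2 + mu2 / 4 * c ^ 2) ≤ -I := by
  nlinarith [mul_nonneg h1.le (sq_nonneg (b - c)),
    mul_nonneg (by linarith : (0:ℝ) ≤ mu2 - mu1) (sq_nonneg c)]
/-- **Statement 11** (Theorem 1, main inequality). Under the CODER iteration with
`F` monotone and satisfying the blockwise Lipschitz assumption, and with
`L² = ‖∑ᵢ Q̂ⁱ‖` used in the step sizes `a_k = (1+γA_{k−1})/(2L)`, for every
`u ∈ ℝ^d` and every `k ≥ 1`:
`∑_{j=1}^k a_j(⟨F(x_j), x_j − u⟩ + g(x_j) − g(u)) + ((1+γA_k)/4)‖u − x_k‖²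
  ≤ ½‖u − x₀‖²`. -/
theorem stmt11 {d m : ℕ} (blk : Fin d → Fin m) (hblk : Monotone blk)
    (F : EuclideanSpace ℝ (Fin d) → EuclideanSpace ℝ (Fin d))
    (γ L : ℝ) (hγ : 0 ≤ γ) (hL : 0 < L)
    -- blockwise Lipschitz assumption
    (Q : Fin m → Matrix (Fin d) (Fin d) ℝ)
    (hpsd : ∀ i, (Q i).PosSemidef)
    (hlip : ∀ (i : Fin m) (z w : EuclideanSpace ℝ (Fin d)),
      ∑ j ∈ Finset.univ.filter (fun j => blk j = i), (F z j - F w j) ^ 2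
        ≤ quadForm (Q i) (z - w))
    (Qhat : Fin m → Matrix (Fin d) (Fin d) ℝ)
    (hQhat : ∀ (i : Fin m) (j k : Fin d),
      Qhat i j k = if i ≤ blk j ∧ i ≤ blk k then Q i j k else 0)
    (hL2 : L ^ 2 = matOpNorm (∑ i, Qhat i))
    -- the block components of the separable regularizer g
    (g : Fin m → EuclideanSpace ℝ (Fin d) → ℝ)
    (hgdep : ∀ (i : Fin m) (z w : EuclideanSpace ℝ (Fin d)),
      (∀ j, blk j = i → z j = w j) → g i z = g i w)
    (hgsc : ∀ i : Fin m, ConvexOn ℝ Set.univ (fun z : EuclideanSpace ℝ (Fin d) =>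
      g i z - γ / 2 * ∑ j ∈ Finset.univ.filter (fun j => blk j = i), (z j) ^ 2))
    (G : EuclideanSpace ℝ (Fin d) → ℝ) (hG : ∀ z, G z = ∑ i, g i z)
    -- step sizes
    (a A : ℕ → ℝ) (ha0 : a 0 = 0) (hA0 : A 0 = 0)
    (ha : ∀ k : ℕ, a (k + 1) = (1 + γ * A k) / (2 * L))
    (hA : ∀ k : ℕ, A (k + 1) = A k + a (k + 1))
    -- iterates, cyclic coordinate gradients, and extrapolated gradients
    (x p q : ℕ → EuclideanSpace ℝ (Fin d))
    (hp0 : p 0 = F (x 0))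
    (hp : ∀ (k : ℕ) (j : Fin d),
      p (k + 1) j = F (WithLp.toLp 2 (fun j' => if blk j' < blk j then x (k + 1) j' else x k j')) j)
    (hq : ∀ (k : ℕ) (j : Fin d),
      q (k + 1) j = p (k + 1) j + a k / a (k + 1) * (F (x k) j - p k j))
    -- estimation sequence and its minimization property
    (ψ : ℕ → EuclideanSpace ℝ (Fin d) → EuclideanSpace ℝ (Fin d) → ℝ)
    (hψ : ∀ (k : ℕ) (z u : EuclideanSpace ℝ (Fin d)),
      ψ k z u = ∑ j ∈ Finset.Icc 1 k, a j * (⟪q j, z - u⟫ + G z - G u)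
        + 1 / 2 * ‖z - x 0‖ ^ 2)
    -- monotonicity of F
    (hmonoF : ∀ z w : EuclideanSpace ℝ (Fin d), 0 ≤ ⟪F z - F w, z - w⟫)
    (hxmin : ∀ k : ℕ, 1 ≤ k → ∀ u z : EuclideanSpace ℝ (Fin d), ψ k (x k) u ≤ ψ k z u) :
    ∀ (u : EuclideanSpace ℝ (Fin d)) (k : ℕ), 1 ≤ k →
      ∑ j ∈ Finset.Icc 1 k, a j * (⟪F (x j), x j - u⟫ + G (x j) - G u)
        + (1 + γ * A k) / 4 * ‖u - x k‖ ^ 2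
        ≤ 1 / 2 * ‖u - x 0‖ ^ 2 := by
  intro u k hk
  have hL2pos : (0:ℝ) < 2 * L := by positivity
  -- basic positivity facts
  have hAnonneg : ∀ n, 0 ≤ A n := by
    intro n; induction n with
    | zero => rw [hA0]
    | succ n ih =>
        rw [hA n, ha n]
        have h1 : 0 ≤ γ * A n := mul_nonneg hγ ih
        have h2 : (0:ℝ) < 1 + γ * A n := by linarith
        have := div_pos h2 hL2pos
        linarith
  have hapos : ∀ n, 0 < a (n + 1) := by
    intro n; rw [ha n]
    have h1 : 0 ≤ γ * A n := mul_nonneg hγ (hAnonneg n)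
    exact div_pos (by linarith) hL2pos
  have hanonneg : ∀ n, 0 ≤ a n := by
    intro n; cases n with
    | zero => rw [ha0]
    | succ n => exact (hapos n).le
  have hAmono : Monotone A := monotone_nat_of_le_succ fun n => by
    rw [hA n]; linarith [hapos n]
  obtain ⟨μ, hμdef⟩ : ∃ μ' : ℕ → ℝ, μ' = fun n => 1 + γ * A n := ⟨_, rfl⟩
  have hμpos : ∀ n, 0 < μ n := by
    intro n
    have : 0 ≤ γ * A n := mul_nonneg hγ (hAnonneg n)
    simp only [hμdef]; linarith
  have hμmono : Monotone μ := fun n n' h => by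
    simp only [hμdef]
    have := mul_le_mul_of_nonneg_left (hAmono h) hγ
    linarith
  have haL : ∀ n, a (n + 1) * L = μ n / 2 := by
    intro n; rw [ha n]; simp only [hμdef]; field_simp
  have haL' : ∀ n, 1 ≤ n → a n * L = μ (n - 1) / 2 := by
    intro n hn
    cases n with
    | zero => omega
    | succ n => exact haL n
  have hAsum : ∀ n, A n = ∑ j ∈ Finset.Icc 1 n, a j := by
    intro n; induction n with
    | zero => rw [hA0]; simp
    | succ n ih =>
        rw [hA n, Finset.sum_Icc_succ_top (by omega : 1 ≤ n + 1), ← ih]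
  -- the error vectors
  obtain ⟨e, he⟩ : ∃ e' : ℕ → EuclideanSpace ℝ (Fin d), e' = fun n => F (x n) - p n :=
    ⟨_, rfl⟩
  have he0 : e 0 = 0 := by simp only [he, hp0, sub_self]
  have herr : ∀ n, 1 ≤ n → ‖e n‖ ≤ L * ‖x n - x (n - 1)‖ := by
    intro n hn
    cases n with
    | zero => omega
    | succ n =>
        simp only [he, Nat.add_sub_cancel]
        exact errBound blk F L hL Q hlip Qhat hQhat hL2 (x (n + 1)) (x n) (p (n + 1)) (hp n)
  -- the potential function
  obtain ⟨Φ, hΦ⟩ : ∃ Φ' : ℕ → EuclideanSpace ℝ (Fin d) → ℝ, Φ' =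
      fun n z => ∑ j ∈ Finset.Icc 1 n, a j * (⟪q j, z⟫ + G z) + 1 / 2 * ‖z - x 0‖ ^ 2 :=
    ⟨_, rfl⟩
  have hψΦ : ∀ (n : ℕ) (z v : EuclideanSpace ℝ (Fin d)),
      ψ n z v = Φ n z - ∑ j ∈ Finset.Icc 1 n, a j * (⟪q j, v⟫ + G v) := by
    intro n z v
    rw [hψ, hΦ]
    have hterm : ∀ j, a j * (⟪q j, z - v⟫ + G z - G v)
        = a j * (⟪q j, z⟫ + G z) - a j * (⟪q j, v⟫ + G v) := by
      intro j; rw [inner_sub_right]; ring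
    simp only [hterm, Finset.sum_sub_distrib]
    ring
  have hΦmin : ∀ n, 1 ≤ n → ∀ z, Φ n (x n) ≤ Φ n z := by
    intro n hn z
    have := hxmin n hn 0 z
    rw [hψΦ, hψΦ] at this
    linarith
  -- convexity of G minus quadratic
  have hGconv : ConvexOn ℝ Set.univ
      (fun z : EuclideanSpace ℝ (Fin d) => G z - γ / 2 * ‖z‖ ^ 2) := by
    have heq : (fun z : EuclideanSpace ℝ (Fin d) => G z - γ / 2 * ‖z‖ ^ 2)
        = fun z => ∑ i, (g i z - γ / 2 * ∑ j ∈ Finset.univ.filter (fun j => blk j = i),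
            (z j) ^ 2) := by
      funext z
      rw [hG, norm_sq_eq_sum, ← Finset.sum_fiberwise Finset.univ blk (fun j => (z j) ^ 2)]
      rw [Finset.sum_sub_distrib, Finset.mul_sum]
    rw [heq]
    exact convexOn_finset_sum _ _ fun i _ => hgsc i
  -- strong convexity of Φ n
  have hΦconv : ∀ n, ConvexOn ℝ Set.univ (fun z => Φ n z - μ n / 2 * ‖z‖ ^ 2) := by
    intro n
    have heq : (fun z => Φ n z - μ n / 2 * ‖z‖ ^ 2)
        = fun z => A n * ((fun z : EuclideanSpace ℝ (Fin d) => G z - γ / 2 * ‖z‖ ^ 2) z)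
          + (⟪(∑ j ∈ Finset.Icc 1 n, a j • q j) - x 0, z⟫ + 1 / 2 * ‖x 0‖ ^ 2) := by
      funext z
      have h1 : ∑ j ∈ Finset.Icc 1 n, a j * (⟪q j, z⟫ + G z)
          = (∑ j ∈ Finset.Icc 1 n, a j * ⟪q j, z⟫) + A n * G z := by
        rw [hAsum n, Finset.sum_mul]
        rw [← Finset.sum_add_distrib]
        exact Finset.sum_congr rfl fun j _ => by ring
      have h2 : ∑ j ∈ Finset.Icc 1 n, a j * ⟪q j, z⟫
          = ⟪∑ j ∈ Finset.Icc 1 n, a j • q j, z⟫ := by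
        rw [sum_inner]
        exact Finset.sum_congr rfl fun j _ => (real_inner_smul_left _ _ _).symm
      have h3 : ‖z - x 0‖ ^ 2 = ‖z‖ ^ 2 - 2 * ⟪z, x 0⟫ + ‖x 0‖ ^ 2 := norm_sub_sq_real z (x 0)
      have h4 : ⟪(∑ j ∈ Finset.Icc 1 n, a j • q j) - x 0, z⟫
          = ⟪∑ j ∈ Finset.Icc 1 n, a j • q j, z⟫ - ⟪z, x 0⟫ := by
        rw [inner_sub_left, real_inner_comm z (x 0)]
      simp only [hΦ, hμdef]
      rw [h1, h2, h3, h4]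
      ring
    rw [heq]
    exact ((hGconv.smul (hAnonneg n)).add (convexOn_inner_affine _ _))
  have hsc : ∀ n, 1 ≤ n → ∀ v, Φ n (x n) + μ n / 2 * ‖v - x n‖ ^ 2 ≤ Φ n v := by
    intro n hn v
    exact strongMin (Φ n) (μ n) (hμpos n).le (hΦconv n) (x n) (hΦmin n hn) v
  -- Claim A
  have claimA : ∀ n, 1 ≤ n →
      ∑ j ∈ Finset.Icc 1 n, a j * (⟪q j, x j⟫ + G (x j))
        + ∑ j ∈ Finset.Icc 1 n, μ (j - 1) / 2 * ‖x j - x (j - 1)‖ ^ 2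
        ≤ Φ n (x n) := by
    intro n hn
    induction n, hn using Nat.le_induction with
    | base =>
        simp only [Finset.Icc_self, Finset.sum_singleton, hΦ]
        have hμ0 : μ (1 - 1) = 1 := by simp [hμdef, hA0]
        rw [hμ0]
    | succ n hn ih =>
        have hsplit : Φ (n + 1) (x (n + 1)) = Φ n (x (n + 1))
            + a (n + 1) * (⟪q (n + 1), x (n + 1)⟫ + G (x (n + 1))) := by
          simp only [hΦ]
          rw [Finset.sum_Icc_succ_top (by omega : 1 ≤ n + 1)]
          ring
        have hlow := hsc n hn (x (n + 1))
        rw [Finset.sum_Icc_succ_top (by omega : 1 ≤ n + 1),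
            Finset.sum_Icc_succ_top (by omega : 1 ≤ n + 1)]
        simp only [Nat.add_sub_cancel]
        rw [hsplit]
        linarith
  -- estimation inequality
  have hEst : ∀ v,
      ∑ j ∈ Finset.Icc 1 k, a j * (⟪q j, x j - v⟫ + G (x j) - G v)
        + ∑ j ∈ Finset.Icc 1 k, μ (j - 1) / 2 * ‖x j - x (j - 1)‖ ^ 2
        + μ k / 2 * ‖v - x k‖ ^ 2
        ≤ 1 / 2 * ‖v - x 0‖ ^ 2 := by
    intro v
    have h1 := hsc k hk v
    have h2 := claimA k hk
    have hΦv : Φ k v = ∑ j ∈ Finset.Icc 1 k, a j * (⟪q j, v⟫ + G v)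
        + 1 / 2 * ‖v - x 0‖ ^ 2 := by rw [hΦ]
    have hsplit : ∑ j ∈ Finset.Icc 1 k, a j * (⟪q j, x j - v⟫ + G (x j) - G v)
        = ∑ j ∈ Finset.Icc 1 k, a j * (⟪q j, x j⟫ + G (x j))
          - ∑ j ∈ Finset.Icc 1 k, a j * (⟪q j, v⟫ + G v) := by
      rw [← Finset.sum_sub_distrib]
      refine Finset.sum_congr rfl fun j _ => ?_
      rw [inner_sub_right]; ring
    rw [hsplit]
    rw [hΦv] at h1
    linarith
  -- the q-splitting identity
  have hqsplit : ∀ (n : ℕ) (y : EuclideanSpace ℝ (Fin d)),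
      a (n + 1) * ⟪q (n + 1), y⟫
        = a (n + 1) * ⟪F (x (n + 1)), y⟫ - a (n + 1) * ⟪e (n + 1), y⟫ + a n * ⟪e n, y⟫ := by
    intro n y
    have hv : q (n + 1) = p (n + 1) + (a n / a (n + 1)) • e n := by
      ext j
      rw [hq n j]
      have h1 : (p (n + 1) + (a n / a (n + 1)) • e n) j
          = p (n + 1) j + a n / a (n + 1) * (e n j) := rfl
      have h2 : e n j = F (x n) j - p n j := by rw [he]; rfl
      rw [h1, h2]
    have h3 : ⟪p (n + 1), y⟫ = ⟪F (x (n + 1)), y⟫ - ⟪e (n + 1), y⟫ := by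
      simp only [he]
      rw [inner_sub_left]; ring
    rw [hv, inner_add_left, real_inner_smul_left, h3]
    have hne : a (n + 1) ≠ 0 := (hapos n).ne'
    field_simp
  -- Claim C: telescoping identity
  have claimC : ∀ n, 1 ≤ n →
      ∑ j ∈ Finset.Icc 1 n, a j * ⟪q j - F (x j), x j - u⟫
        = -(a n * ⟪e n, x n - u⟫)
          + ∑ j ∈ Finset.Icc 1 (n - 1), a j * ⟪e j, x (j + 1) - x j⟫ := by
    intro n hn
    induction n, hn using Nat.le_induction with
    | base =>
        simp only [Finset.Icc_self, Finset.sum_singleton, Nat.sub_self]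
        have h0 : (Finset.Icc 1 0 : Finset ℕ) = ∅ := by decide
        rw [h0, Finset.sum_empty]
        have := hqsplit 0 (x 1 - u)
        rw [ha0] at this
        have hq1 : a 1 * ⟪q 1 - F (x 1), x 1 - u⟫
            = a 1 * ⟪q 1, x 1 - u⟫ - a 1 * ⟪F (x 1), x 1 - u⟫ := by
          rw [inner_sub_left]; ring
        rw [hq1]
        linarith
    | succ n hn ih =>
        have hsumn : ∀ f : ℕ → ℝ, ∑ j ∈ Finset.Icc 1 n, f j
            = ∑ j ∈ Finset.Icc 1 (n - 1), f j + f n := by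
          intro f
          have hsucc : n - 1 + 1 = n := Nat.succ_pred_eq_of_pos hn
          conv_lhs => rw [← hsucc]
          rw [Finset.sum_Icc_succ_top (by omega : 1 ≤ n - 1 + 1), hsucc]
        rw [Finset.sum_Icc_succ_top (by omega : 1 ≤ n + 1), ih]
        simp only [Nat.add_sub_cancel]
        rw [hsumn (fun j => a j * ⟪e j, x (j + 1) - x j⟫)]
        have hterm : a (n + 1) * ⟪q (n + 1) - F (x (n + 1)), x (n + 1) - u⟫
            = -(a (n + 1) * ⟪e (n + 1), x (n + 1) - u⟫) + a n * ⟪e n, x (n + 1) - u⟫ := by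
          have := hqsplit n (x (n + 1) - u)
          rw [inner_sub_left]
          linarith
        have hcross : a n * ⟪e n, x (n + 1) - u⟫ - a n * ⟪e n, x n - u⟫
            = a n * ⟪e n, x (n + 1) - x n⟫ := by
          rw [← mul_sub, ← inner_sub_right]
          congr 2
          abel
        rw [hterm]
        linarith
  -- Claim D: absorbing the cross terms
  have claimD : ∀ n, 1 ≤ n →
      ∑ j ∈ Finset.Icc 1 (n - 1),
          μ (j - 1) / 4 * (‖x j - x (j - 1)‖ ^ 2 + ‖x (j + 1) - x j‖ ^ 2)
        + μ (n - 1) / 4 * ‖x n - x (n - 1)‖ ^ 2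
      ≤ ∑ j ∈ Finset.Icc 1 n, μ (j - 1) / 2 * ‖x j - x (j - 1)‖ ^ 2 := by
    intro n hn
    induction n, hn using Nat.le_induction with
    | base =>
        have h0 : (Finset.Icc 1 0 : Finset ℕ) = ∅ := by decide
        rw [Nat.sub_self, h0, Finset.sum_empty, Finset.Icc_self, Finset.sum_singleton]
        have := mul_nonneg (hμpos 0).le (sq_nonneg ‖x 1 - x 0‖)
        rw [Nat.sub_self]
        nlinarith
    | succ n hn ih =>
        have hsumn : ∀ f : ℕ → ℝ, ∑ j ∈ Finset.Icc 1 n, f j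
            = ∑ j ∈ Finset.Icc 1 (n - 1), f j + f n := by
          intro f
          have hsucc : n - 1 + 1 = n := Nat.succ_pred_eq_of_pos hn
          conv_lhs => rw [← hsucc]
          rw [Finset.sum_Icc_succ_top (by omega : 1 ≤ n - 1 + 1), hsucc]
        rw [Finset.sum_Icc_succ_top (by omega : 1 ≤ n + 1)]
        simp only [Nat.add_sub_cancel]
        rw [hsumn (fun j => μ (j - 1) / 4 * (‖x j - x (j - 1)‖ ^ 2 + ‖x (j + 1) - x j‖ ^ 2))]
        have hmu : μ (n - 1) ≤ μ n := hμmono (Nat.sub_le n 1)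
        have hextra : (μ n - μ (n - 1)) * ‖x (n + 1) - x n‖ ^ 2 ≥ 0 :=
          mul_nonneg (by linarith) (sq_nonneg _)
        nlinarith [ih]
  -- split the q-sum into the F-sum plus error terms
  have hsplitq : ∑ j ∈ Finset.Icc 1 k, a j * (⟪q j, x j - u⟫ + G (x j) - G u)
      = ∑ j ∈ Finset.Icc 1 k, a j * (⟪F (x j), x j - u⟫ + G (x j) - G u)
        + ∑ j ∈ Finset.Icc 1 k, a j * ⟪q j - F (x j), x j - u⟫ := by
    rw [← Finset.sum_add_distrib]
    refine Finset.sum_congr rfl fun j _ => ?_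
    rw [inner_sub_left]; ring
  -- bound the leading error term
  have hbound1 : -(μ (k - 1) / 4 * ‖x k - x (k - 1)‖ ^ 2 + μ k / 4 * ‖u - x k‖ ^ 2)
      ≤ -(a k * ⟪e k, x k - u⟫) := by
    have h1 : ⟪e k, x k - u⟫ ≤ ‖e k‖ * ‖x k - u‖ := real_inner_le_norm _ _
    have h2 : ‖e k‖ ≤ L * ‖x k - x (k - 1)‖ := herr k hk
    have hak : 0 ≤ a k := hanonneg k
    have h3 : a k * ⟪e k, x k - u⟫ ≤ a k * L * ‖x k - x (k - 1)‖ * ‖x k - u‖ := by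
      calc a k * ⟪e k, x k - u⟫ ≤ a k * (‖e k‖ * ‖x k - u‖) :=
            mul_le_mul_of_nonneg_left h1 hak
        _ ≤ a k * (L * ‖x k - x (k - 1)‖ * ‖x k - u‖) :=
            mul_le_mul_of_nonneg_left
              (mul_le_mul_of_nonneg_right h2 (norm_nonneg _)) hak
        _ = _ := by ring
    rw [haL' k hk] at h3
    have hrev : ‖u - x k‖ = ‖x k - u‖ := norm_sub_rev _ _
    rw [← hrev] at h3
    have hmu : μ (k - 1) ≤ μ k := hμmono (Nat.sub_le k 1)
    exact youngIneq (hμpos (k - 1)) hmu h3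
  -- bound the telescoped cross terms
  have hbound2 : -∑ j ∈ Finset.Icc 1 (k - 1),
        μ (j - 1) / 4 * (‖x j - x (j - 1)‖ ^ 2 + ‖x (j + 1) - x j‖ ^ 2)
      ≤ ∑ j ∈ Finset.Icc 1 (k - 1), a j * ⟪e j, x (j + 1) - x j⟫ := by
    rw [← Finset.sum_neg_distrib]
    refine Finset.sum_le_sum fun j hj => ?_
    have hj1 : 1 ≤ j := (Finset.mem_Icc.mp hj).1
    have h2 : ‖e j‖ ≤ L * ‖x j - x (j - 1)‖ := herr j hj1
    have haj : 0 ≤ a j := hanonneg j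
    have hIneg : -⟪e j, x (j + 1) - x j⟫ ≤ ‖e j‖ * ‖x (j + 1) - x j‖ :=
      (neg_le_abs _).trans (abs_real_inner_le_norm _ _)
    have h3 : -(a j * ⟪e j, x (j + 1) - x j⟫) ≤ a j * L * ‖x j - x (j - 1)‖ * ‖x (j + 1) - x j‖ := by
      calc -(a j * ⟪e j, x (j + 1) - x j⟫) = a j * -⟪e j, x (j + 1) - x j⟫ := by ring
        _ ≤ a j * (‖e j‖ * ‖x (j + 1) - x j‖) := mul_le_mul_of_nonneg_left hIneg haj
        _ ≤ a j * (L * ‖x j - x (j - 1)‖ * ‖x (j + 1) - x j‖) :=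
            mul_le_mul_of_nonneg_left
              (mul_le_mul_of_nonneg_right h2 (norm_nonneg _)) haj
        _ = _ := by ring
    rw [haL' j hj1] at h3
    have := youngIneq (hμpos (j - 1)) (le_refl (μ (j - 1))) h3
    linarith only [this]
  -- put everything together
  have hest := hEst u
  rw [hsplitq, claimC k hk] at hest
  have hD := claimD k hk
  have hgoalμ : (1 + γ * A k) / 4 = μ k / 4 := by rw [hμdef]
  rw [hgoalμ]
  linarith only [hest, hD, hbound1, hbound2]
end
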